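/- arXiv:0805.2377 — 2 statements merged into one kernel-verified Lean document; each statement's English description precedes it below -/
import Mathlib

section
/- Let A be a k-algebra. The assignment D ↦ D^* gives a bijection between finite-dimensional simple subcoalgebras D of A^o and finite-dimensional simple algebra quotients of A (equivalently, isomorphism classes of finite-dimensional simple A-modules). -/
set_option maxHeartbeats 1000000
set_option synthInstance.maxHeartbeats 400000

section Aux

variable {k V : Type*} [Field k] [AddCommGroup V] [Module k V]

/-- separating functional vanishing on a subspace -/
lemma exists_dual_sep {J : Submodule k V} {a : V} (ha : a ∉ J) :
    ∃ f : Module.Dual k V, f ∈ J.dualAnnihilator ∧ f a ≠ 0 := by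
  have h0 : J.mkQ a ≠ 0 := by
    simpa [Submodule.mkQ_apply, Submodule.Quotient.mk_eq_zero] using ha
  have := (not_iff_not.mpr (Module.forall_dual_apply_eq_zero_iff k (J.mkQ a))).mpr h0
  push_neg at this
  obtain ⟨φ, hφ⟩ := this
  refine ⟨φ.comp J.mkQ, ?_, hφ⟩
  rw [Submodule.mem_dualAnnihilator]
  intro x hx
  have : J.mkQ x = 0 := by simpa [Submodule.mkQ_apply, Submodule.Quotient.mk_eq_zero] using hx
  simp [this]

/-- cofiniteness of the coannihilator of a finite-dimensional subspace of the dual -/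
lemma fd_quot_coann (D : Submodule k (Module.Dual k V)) [FiniteDimensional k D] :
    FiniteDimensional k (V ⧸ D.dualCoannihilator) := by
  let φ : V →ₗ[k] Module.Dual k D := D.subtype.dualMap.comp (Module.Dual.eval k V)
  have hker : LinearMap.ker φ = D.dualCoannihilator := by
    ext a
    simp only [LinearMap.mem_ker, Submodule.mem_dualCoannihilator]
    constructor
    · intro h f hf
      have := congrArg (fun ψ => ψ ⟨f, hf⟩) h
      simpa [φ] using this
    · intro h
      ext f
      simpa [φ] using h f.1 f.2
  haveI : Module.Free k D := Module.Free.of_divisionRing k D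
  haveI : FiniteDimensional k (Module.Dual k D) :=
    Module.Finite.of_basis (Module.finBasis k D).dualBasis
  rw [← hker]
  exact FiniteDimensional.of_injective ((LinearMap.ker φ).liftQ φ le_rfl)
    (LinearMap.ker_eq_bot.mp ((LinearMap.ker φ).ker_liftQ_eq_bot φ le_rfl le_rfl))

/-- double annihilator for finite-dimensional subspaces of the dual -/
lemma dualAnn_coann (D : Submodule k (Module.Dual k V)) [FiniteDimensional k D] :
    D.dualCoannihilator.dualAnnihilator = D := by
  refine le_antisymm ?_ (Submodule.le_dualCoannihilator_dualAnnihilator D)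
  set I := D.dualCoannihilator with hI
  haveI : FiniteDimensional k (V ⧸ I) := fd_quot_coann D
  have hkill : ∀ f : D, ∀ x ∈ I, (f : Module.Dual k V) x = 0 := fun f x hx =>
    (Submodule.mem_dualCoannihilator _).mp hx _ f.2
  let ρ : D →ₗ[k] Module.Dual k (V ⧸ I) :=
    { toFun := fun f => I.liftQ (f : Module.Dual k V) (fun x hx => by
        simpa [LinearMap.mem_ker] using hkill f x hx)
      map_add' := by
        intro f g
        apply Submodule.linearMap_qext
        ext a
        simp
      map_smul' := by
        intro c f
        apply Submodule.linearMap_qext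
        ext a
        simp }
  have hρ : ∀ (f : D) (a : V), ρ f (I.mkQ a) = (f : Module.Dual k V) a := fun f a => rfl
  set Φ := LinearMap.range ρ with hΦ
  have hcoann : Φ.dualCoannihilator = ⊥ := by
    rw [eq_bot_iff]
    intro v hv
    obtain ⟨a, rfl⟩ := I.mkQ_surjective v
    simp only [Submodule.mem_dualCoannihilator] at hv
    have : a ∈ I := by
      rw [hI, Submodule.mem_dualCoannihilator]
      intro f hf
      have := hv (ρ ⟨f, hf⟩) ⟨⟨f, hf⟩, rfl⟩
      exact (hρ ⟨f, hf⟩ a).symm.trans this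
    simpa [Submodule.mkQ_apply, Submodule.Quotient.mk_eq_zero] using this
  have htop : Φ = ⊤ := by
    apply Submodule.eq_top_of_finrank_eq
    have h1 := Subspace.finrank_add_finrank_dualCoannihilator_eq Φ
    rw [hcoann, finrank_bot, add_zero] at h1
    rw [h1, Subspace.dual_finrank_eq]
  intro f hf
  have hfI : ∀ x ∈ I, f x = 0 := (Submodule.mem_dualAnnihilator _).mp hf
  have hmem : I.liftQ f (fun x hx => by simpa [LinearMap.mem_ker] using hfI x hx) ∈ Φ :=
    htop ▸ Submodule.mem_top
  obtain ⟨d, hd⟩ := hmem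
  have : (d : Module.Dual k V) = f := by
    ext a
    have := congrArg (fun ψ => ψ (I.mkQ a)) hd
    exact (hρ d a).symm.trans this
  exact this ▸ d.2

/-- shorten a representation whose right family is linearly dependent -/
lemma reduce_step (F : V → V → k) (n : ℕ) (g h : Fin (n + 1) → Module.Dual k V)
    (hrep : ∀ a b, F a b = ∑ i, g i a * h i b) (hdep : ¬ LinearIndependent k h) :
    ∃ g₂ h₂ : Fin n → Module.Dual k V,
      (∀ i, g₂ i ∈ Submodule.span k (Set.range g)) ∧
      (∀ i, h₂ i ∈ Submodule.span k (Set.range h)) ∧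
      ∀ a b, F a b = ∑ i, g₂ i a * h₂ i b := by
  obtain ⟨c, hc0, j, hcj⟩ := Fintype.not_linearIndependent_iff.mp hdep
  set e : Fin n → k := fun i => -((c j)⁻¹ * c (j.succAbove i)) with he
  have h0 : ∀ b, ∑ i, c i * h i b = 0 := by
    intro b
    have := congrArg (fun φ : Module.Dual k V => φ b) hc0
    simpa [LinearMap.sum_apply, LinearMap.smul_apply, smul_eq_mul] using this
  have hjb : ∀ b, h j b = ∑ i, e i * h (j.succAbove i) b := by
    intro b
    have h1 := h0 b
    rw [Fin.sum_univ_succAbove (fun i => c i * h i b) j] at h1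
    have h3 : c j * h j b = - ∑ i, c (j.succAbove i) * h (j.succAbove i) b :=
      eq_neg_of_add_eq_zero_left h1
    have h4 := congrArg (fun t => (c j)⁻¹ * t) h3
    rw [← mul_assoc, inv_mul_cancel₀ hcj, one_mul] at h4
    rw [h4, mul_neg, Finset.mul_sum, ← Finset.sum_neg_distrib]
    exact Finset.sum_congr rfl fun i _ => by rw [he]; ring
  refine ⟨fun i => g (j.succAbove i) + e i • g j, fun i => h (j.succAbove i), ?_, ?_, ?_⟩
  · intro i
    exact Submodule.add_mem _ (Submodule.subset_span ⟨_, rfl⟩)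
      (Submodule.smul_mem _ _ (Submodule.subset_span ⟨j, rfl⟩))
  · intro i
    exact Submodule.subset_span ⟨_, rfl⟩
  · intro a b
    rw [hrep a b, Fin.sum_univ_succAbove (fun i => g i a * h i b) j, hjb b, Finset.mul_sum,
      ← Finset.sum_add_distrib]
    refine Finset.sum_congr rfl fun i _ => ?_
    simp only [LinearMap.add_apply, LinearMap.smul_apply, smul_eq_mul]
    ring

/-- every finite representation can be replaced by one with both families
linearly independent, inside the spans of the original families. -/
lemma rewrite_min (F : V → V → k) :
    ∀ (n : ℕ) (g h : Fin n → Module.Dual k V), (∀ a b, F a b = ∑ i, g i a * h i b) →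
    ∃ (m : ℕ) (g' h' : Fin m → Module.Dual k V),
      (∀ i, g' i ∈ Submodule.span k (Set.range g)) ∧
      (∀ i, h' i ∈ Submodule.span k (Set.range h)) ∧
      LinearIndependent k g' ∧ LinearIndependent k h' ∧
      ∀ a b, F a b = ∑ i, g' i a * h' i b := by
  intro n
  induction n using Nat.strong_induction_on with
  | _ n IH =>
    intro g h hrep
    by_cases hh : LinearIndependent k h
    · by_cases hg : LinearIndependent k g
      · exact ⟨n, g, h, fun i => Submodule.subset_span ⟨i, rfl⟩,
          fun i => Submodule.subset_span ⟨i, rfl⟩, hg, hh, hrep⟩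
      · -- g is dependent; use the swapped version
        cases n with
        | zero => exact absurd linearIndependent_empty_type hg
        | succ n' =>
          obtain ⟨h₂, g₂, hh₂, hg₂, hrep₂⟩ := reduce_step (fun a b => F b a) n' h g
            (fun a b => by
              show F b a = _
              rw [hrep b a]
              exact Finset.sum_congr rfl fun i _ => mul_comm _ _) hg
          obtain ⟨m, g', h', hg', hh', hgi, hhi, hrep'⟩ := IH n' (Nat.lt_succ_self n') g₂ h₂
            (fun a b => by
              have := hrep₂ b a
              rw [this]
              exact Finset.sum_congr rfl fun i _ => mul_comm _ _)
          refine ⟨m, g', h', fun i => ?_, fun i => ?_, hgi, hhi, hrep'⟩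
          · exact Submodule.span_le.mpr (Set.range_subset_iff.mpr hg₂) (hg' i)
          · exact Submodule.span_le.mpr (Set.range_subset_iff.mpr hh₂) (hh' i)
    · cases n with
      | zero => exact absurd linearIndependent_empty_type hh
      | succ n' =>
        obtain ⟨g₂, h₂, hg₂, hh₂, hrep₂⟩ := reduce_step F n' g h hrep hh
        obtain ⟨m, g', h', hg', hh', hgi, hhi, hrep'⟩ := IH n' (Nat.lt_succ_self n') g₂ h₂ hrep₂
        refine ⟨m, g', h', fun i => ?_, fun i => ?_, hgi, hhi, hrep'⟩
        · exact Submodule.span_le.mpr (Set.range_subset_iff.mpr hg₂) (hg' i)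
        · exact Submodule.span_le.mpr (Set.range_subset_iff.mpr hh₂) (hh' i)

end Aux



variable (k A : Type*) [Field k] [Ring A] [Algebra k A]

/-- `f ∈ A^o` : the kernel of `f` contains a two-sided ideal of finite codimension. -/
def memFiniteDual (f : Module.Dual k A) : Prop :=
  ∃ I : Submodule k A, (∀ (a : A), ∀ x ∈ I, a * x ∈ I) ∧ (∀ (a : A), ∀ x ∈ I, x * a ∈ I) ∧
    FiniteDimensional k (A ⧸ I) ∧ ∀ x ∈ I, f x = 0

/-- A subspace `D` of `A*` is a subcoalgebra of `A^o` if it consists of elements of `A^o`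
and is closed under the comultiplication dual to the multiplication of `A`. -/
def IsSubcoalgebraOfDual (D : Submodule k (Module.Dual k A)) : Prop :=
  (∀ f ∈ D, memFiniteDual k A f) ∧
  ∀ f ∈ D, ∃ (n : ℕ) (g h : Fin n → Module.Dual k A),
    (∀ i, g i ∈ D ∧ h i ∈ D) ∧ ∀ a b : A, f (a * b) = ∑ i, g i a * h i b

/-- The two-sidedness condition for a `k`-subspace of `A`. -/
def IsTwoSided (I : Submodule k A) : Prop :=
  (∀ (a : A), ∀ x ∈ I, a * x ∈ I) ∧ (∀ (a : A), ∀ x ∈ I, x * a ∈ I)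

section Main
variable {k A}

lemma isSubcoalgebra_def {D : Submodule k (Module.Dual k A)} :
    IsSubcoalgebraOfDual k A D ↔
    (∀ f ∈ D, memFiniteDual k A f) ∧
    ∀ f ∈ D, ∃ (n : ℕ) (g h : Fin n → Module.Dual k A),
      (∀ i, g i ∈ D ∧ h i ∈ D) ∧ ∀ a b : A, f (a * b) = ∑ i, g i a * h i b := Iff.rfl

lemma isTwoSided_def {I : Submodule k A} :
    IsTwoSided k A I ↔
    (∀ (a : A), ∀ x ∈ I, a * x ∈ I) ∧ (∀ (a : A), ∀ x ∈ I, x * a ∈ I) := Iff.rfl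

/-- the coannihilator of a subcoalgebra is a two-sided ideal -/
lemma coann_twoSided {D : Submodule k (Module.Dual k A)} (hD : IsSubcoalgebraOfDual k A D) :
    IsTwoSided k A D.dualCoannihilator := by
  obtain ⟨-, hD2⟩ := isSubcoalgebra_def.mp hD
  rw [isTwoSided_def]
  constructor
  · intro a x hx
    rw [Submodule.mem_dualCoannihilator]
    intro f hf
    obtain ⟨n, g, h, hgh, hrep⟩ := hD2 f hf
    rw [hrep]
    refine Finset.sum_eq_zero fun i _ => ?_
    rw [(Submodule.mem_dualCoannihilator _).mp hx _ (hgh i).2, mul_zero]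
  · intro a x hx
    rw [Submodule.mem_dualCoannihilator]
    intro f hf
    obtain ⟨n, g, h, hgh, hrep⟩ := hD2 f hf
    rw [hrep]
    refine Finset.sum_eq_zero fun i _ => ?_
    rw [(Submodule.mem_dualCoannihilator _).mp hx _ (hgh i).1, zero_mul]

/-- intersecting a subcoalgebra with the annihilator of a two-sided ideal
gives a subcoalgebra -/
lemma subcoalg_inf {D : Submodule k (Module.Dual k A)} (hD : IsSubcoalgebraOfDual k A D)
    {J : Submodule k A} (hJ : IsTwoSided k A J) :
    IsSubcoalgebraOfDual k A (D ⊓ J.dualAnnihilator) := by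
  obtain ⟨hD1, hD2⟩ := isSubcoalgebra_def.mp hD
  obtain ⟨hJ1, hJ2⟩ := isTwoSided_def.mp hJ
  rw [isSubcoalgebra_def]
  constructor
  · intro f hf
    exact hD1 f (Submodule.mem_inf.mp hf).1
  · intro f hf
    obtain ⟨hfD, hfJ⟩ := Submodule.mem_inf.mp hf
    have hfJ' : ∀ x ∈ J, f x = 0 := (Submodule.mem_dualAnnihilator _).mp hfJ
    obtain ⟨n, g, h, hgh, hrep⟩ := hD2 f hfD
    obtain ⟨m, g', h', hg', hh', hgi, hhi, hrep'⟩ :=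
      rewrite_min (fun a b => f (a * b)) n g h hrep
    have hgD : ∀ i, g' i ∈ D :=
      fun i => Submodule.span_le.mpr (Set.range_subset_iff.mpr fun j => (hgh j).1) (hg' i)
    have hhD : ∀ i, h' i ∈ D :=
      fun i => Submodule.span_le.mpr (Set.range_subset_iff.mpr fun j => (hgh j).2) (hh' i)
    -- h' coefficients vanish on J (using independence of g')
    have hhJ : ∀ i, ∀ x ∈ J, h' i x = 0 := by
      intro i x hx
      have hzero : ∑ i, h' i x • g' i = 0 := by
        ext a
        simp only [LinearMap.sum_apply, LinearMap.smul_apply, smul_eq_mul,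
          LinearMap.zero_apply]
        have h1 : f (a * x) = 0 := hfJ' _ (hJ1 a x hx)
        rw [hrep'] at h1
        rw [← h1]
        exact Finset.sum_congr rfl fun i _ => mul_comm _ _
      exact Fintype.linearIndependent_iff.mp hgi _ hzero i
    -- g' coefficients vanish on J (using independence of h')
    have hgJ : ∀ i, ∀ x ∈ J, g' i x = 0 := by
      intro i x hx
      have hzero : ∑ i, g' i x • h' i = 0 := by
        ext b
        simp only [LinearMap.sum_apply, LinearMap.smul_apply, smul_eq_mul,
          LinearMap.zero_apply]
        have h1 : f (x * b) = 0 := hfJ' _ (hJ2 b x hx)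
        rw [hrep'] at h1
        rw [← h1]
      exact Fintype.linearIndependent_iff.mp hhi _ hzero i
    refine ⟨m, g', h', fun i => ?_, hrep'⟩
    constructor
    · exact Submodule.mem_inf.mpr ⟨hgD i, (Submodule.mem_dualAnnihilator _).mpr (hgJ i)⟩
    · exact Submodule.mem_inf.mpr ⟨hhD i, (Submodule.mem_dualAnnihilator _).mpr (hhJ i)⟩

/-- the annihilator of a cofinite two-sided ideal is a subcoalgebra -/
lemma dualAnn_subcoalg {I : Submodule k A} (hI : IsTwoSided k A I)
    (hfd : FiniteDimensional k (A ⧸ I)) :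
    IsSubcoalgebraOfDual k A I.dualAnnihilator := by
  obtain ⟨hI1, hI2⟩ := isTwoSided_def.mp hI
  rw [isSubcoalgebra_def]
  constructor
  · intro f hf
    exact ⟨I, hI1, hI2, hfd, (Submodule.mem_dualAnnihilator _).mp hf⟩
  · intro f hf
    have hf' : ∀ x ∈ I, f x = 0 := (Submodule.mem_dualAnnihilator _).mp hf
    haveI := hfd
    haveI : Module.Free k (A ⧸ I) := Module.Free.of_divisionRing k (A ⧸ I)
    set n := Module.finrank k (A ⧸ I) with hn
    set b : Module.Basis (Fin n) k (A ⧸ I) := Module.finBasis k (A ⧸ I) with hb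
    choose x hx using fun i => I.mkQ_surjective (b i)
    refine ⟨n, fun i => (b.coord i).comp I.mkQ,
      fun i => f.comp (LinearMap.mulLeft k (x i)), fun i => ⟨?_, ?_⟩, ?_⟩
    · rw [Submodule.mem_dualAnnihilator]
      intro y hy
      have : I.mkQ y = 0 := by
        simpa [Submodule.mkQ_apply, Submodule.Quotient.mk_eq_zero] using hy
      simp [LinearMap.comp_apply, this]
    · rw [Submodule.mem_dualAnnihilator]
      intro y hy
      have hmem : x i * y ∈ I := hI1 (x i) y hy
      simpa [LinearMap.comp_apply, LinearMap.mulLeft_apply] using hf' _ hmem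
    · intro a c
      have hsum : I.mkQ (∑ i, b.repr (I.mkQ a) i • x i) = I.mkQ a := by
        rw [map_sum]
        simp_rw [map_smul, hx]
        exact b.sum_repr (I.mkQ a)
      have hmemI : a - ∑ i, b.repr (I.mkQ a) i • x i ∈ I := by
        have : I.mkQ (a - ∑ i, b.repr (I.mkQ a) i • x i) = 0 := by
          rw [map_sub, hsum, sub_self]
        rwa [← LinearMap.mem_ker, Submodule.ker_mkQ] at this
      have hmul : (a - ∑ i, b.repr (I.mkQ a) i • x i) * c ∈ I := hI2 c _ hmemI
      have hdecomp : a * c = (∑ i, b.repr (I.mkQ a) i • (x i * c)) +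
          (a - ∑ i, b.repr (I.mkQ a) i • x i) * c := by
        rw [sub_mul, Finset.sum_mul]
        simp_rw [smul_mul_assoc]
        abel
      rw [hdecomp, map_add, hf' _ hmul, add_zero, map_sum]
      refine Finset.sum_congr rfl fun i _ => ?_
      simp [LinearMap.comp_apply, LinearMap.mulLeft_apply, Module.Basis.coord_apply, map_smul,
        smul_eq_mul]

lemma fd_dualAnn {I : Submodule k A} (hfd : FiniteDimensional k (A ⧸ I)) :
    FiniteDimensional k I.dualAnnihilator := by
  haveI := hfd
  haveI : Module.Free k (A ⧸ I) := Module.Free.of_divisionRing k (A ⧸ I)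
  haveI : FiniteDimensional k (Module.Dual k (A ⧸ I)) :=
    Module.Finite.of_basis (Module.finBasis k (A ⧸ I)).dualBasis
  have h1 : FiniteDimensional k (LinearMap.range I.mkQ.dualMap) :=
    Module.Finite.range I.mkQ.dualMap
  rwa [Submodule.range_dualMap_mkQ_eq] at h1

/-- properties of the forward map `D ↦ D.dualCoannihilator` -/
lemma fwd_spec (D : Submodule k (Module.Dual k A)) (hDc : IsSubcoalgebraOfDual k A D)
    (hfd : FiniteDimensional k D) (hne : D ≠ ⊥)
    (hsimp : ∀ D' ≤ D, IsSubcoalgebraOfDual k A D' → D' = ⊥ ∨ D' = D) :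
    IsTwoSided k A D.dualCoannihilator ∧ FiniteDimensional k (A ⧸ D.dualCoannihilator) ∧
      D.dualCoannihilator ≠ ⊤ ∧
      ∀ J : Submodule k A, IsTwoSided k A J → D.dualCoannihilator ≤ J →
        J = D.dualCoannihilator ∨ J = ⊤ := by
  haveI := hfd
  refine ⟨coann_twoSided hDc, fd_quot_coann D, ?_, ?_⟩
  · intro htop
    obtain ⟨f, hfD, hf0⟩ := (Submodule.ne_bot_iff D).mp hne
    apply hf0
    ext a
    have : a ∈ D.dualCoannihilator := htop ▸ Submodule.mem_top
    rw [(Submodule.mem_dualCoannihilator _).mp this f hfD]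
    rfl
  · intro J hJ hIJ
    rcases hsimp (D ⊓ J.dualAnnihilator) inf_le_left (subcoalg_inf hDc hJ) with hbot | heq
    · right
      by_contra hJt
      obtain ⟨a, ha⟩ : ∃ a, a ∉ J := by
        by_contra hall
        push_neg at hall
        exact hJt (Submodule.eq_top_iff'.mpr hall)
      obtain ⟨f, hfJ, hfa⟩ := exists_dual_sep ha
      have hfI : f ∈ D.dualCoannihilator.dualAnnihilator := by
        rw [Submodule.mem_dualAnnihilator]
        intro y hy
        exact (Submodule.mem_dualAnnihilator _).mp hfJ y (hIJ hy)
      rw [dualAnn_coann D] at hfI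
      have : f ∈ D ⊓ J.dualAnnihilator := Submodule.mem_inf.mpr ⟨hfI, hfJ⟩
      rw [hbot] at this
      have hf0 : f = 0 := by simpa [Submodule.mem_bot] using this
      exact hfa (by rw [hf0]; rfl)
    · left
      have hDle : D ≤ J.dualAnnihilator := by
        conv_lhs => rw [← heq]
        exact inf_le_right
      exact le_antisymm (Submodule.le_dualAnnihilator_iff_le_dualCoannihilator.mp hDle) hIJ

/-- properties of the backward map `I ↦ I.dualAnnihilator` -/
lemma bwd_spec (I : Submodule k A) (hI : IsTwoSided k A I)
    (hfd : FiniteDimensional k (A ⧸ I)) (hne : I ≠ ⊤)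
    (hmax : ∀ J : Submodule k A, IsTwoSided k A J → I ≤ J → J = I ∨ J = ⊤) :
    IsSubcoalgebraOfDual k A I.dualAnnihilator ∧ FiniteDimensional k I.dualAnnihilator ∧
      I.dualAnnihilator ≠ ⊥ ∧
      ∀ D' ≤ I.dualAnnihilator, IsSubcoalgebraOfDual k A D' →
        D' = ⊥ ∨ D' = I.dualAnnihilator := by
  haveI := fd_dualAnn hfd
  refine ⟨dualAnn_subcoalg hI hfd, fd_dualAnn hfd, ?_, ?_⟩
  · obtain ⟨a, ha⟩ : ∃ a, a ∉ I := by
      by_contra hall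
      push_neg at hall
      exact hne (Submodule.eq_top_iff'.mpr hall)
    obtain ⟨f, hfI, hfa⟩ := exists_dual_sep ha
    exact (Submodule.ne_bot_iff _).mpr ⟨f, hfI, fun h => hfa (by rw [h]; rfl)⟩
  · intro D' hle hsub
    by_cases hb : D' = ⊥
    · exact Or.inl hb
    right
    haveI : FiniteDimensional k D' := Submodule.finiteDimensional_of_le hle
    have hIJ : I ≤ D'.dualCoannihilator := by
      intro y hy
      rw [Submodule.mem_dualCoannihilator]
      intro f hf
      exact (Submodule.mem_dualAnnihilator _).mp (hle hf) y hy
    rcases hmax D'.dualCoannihilator (coann_twoSided hsub) hIJ with hJI | hJt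
    · rw [← dualAnn_coann D', hJI]
    · exfalso
      apply hb
      rw [eq_bot_iff]
      intro f hf
      have : ∀ a : A, f a = 0 := fun a =>
        (Submodule.mem_dualCoannihilator _).mp (hJt ▸ Submodule.mem_top) f hf
      rw [Submodule.mem_bot]
      ext a
      rw [this a]
      rfl

end Main

/-- There is a bijection `D ↦ D*` between the finite-dimensional simple subcoalgebras of
`A^o` and the finite-dimensional simple algebra quotients of `A` (encoded by their kernels:
two-sided ideals `I` of finite codimension that are maximal among two-sided ideals, so that
`A/I` is a finite-dimensional simple algebra); it sends `D` to the common kernel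
`{a | f(a) = 0 for all f ∈ D}`. -/
theorem simple_subcoalgebras_biject_with_simple_quotients :
    ∃ e : {D : Submodule k (Module.Dual k A) //
            IsSubcoalgebraOfDual k A D ∧ FiniteDimensional k D ∧ D ≠ ⊥ ∧
            ∀ D' ≤ D, IsSubcoalgebraOfDual k A D' → D' = ⊥ ∨ D' = D} ≃
          {I : Submodule k A // IsTwoSided k A I ∧ FiniteDimensional k (A ⧸ I) ∧ I ≠ ⊤ ∧
            ∀ J : Submodule k A, IsTwoSided k A J → I ≤ J → J = I ∨ J = ⊤},
      ∀ D, ∀ a : A, a ∈ (e D : Submodule k A) ↔ ∀ f ∈ (D : Submodule k (Module.Dual k A)), f a = 0 := by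
  refine ⟨{
    toFun := fun D => ⟨D.1.dualCoannihilator, fwd_spec D.1 D.2.1 D.2.2.1 D.2.2.2.1 D.2.2.2.2⟩
    invFun := fun I => ⟨I.1.dualAnnihilator, bwd_spec I.1 I.2.1 I.2.2.1 I.2.2.2.1 I.2.2.2.2⟩
    left_inv := fun D => Subtype.ext (by
      haveI := D.2.2.1
      exact dualAnn_coann D.1)
    right_inv := fun I => Subtype.ext (Subspace.dualAnnihilator_dualCoannihilator_eq) },
    fun D a => Submodule.mem_dualCoannihilator a⟩
end

section
/- If D is a simple k-coalgebra, then its dual algebra D* (with convolution product) is a simple k-algebra. -/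
open TensorProduct

/-- A subspace `E` of a coalgebra `D` is a subcoalgebra if `Δ(E) ⊆ E ⊗ E`. -/
def IsSubcoalgebra {k D : Type*} [Field k] [AddCommGroup D] [Module k D] [Coalgebra k D]
    (E : Submodule k D) : Prop :=
  ∀ x ∈ E, Coalgebra.comul (R := k) x ∈ LinearMap.range (TensorProduct.map E.subtype E.subtype)

/-- The convolution product on the dual of a coalgebra. -/
noncomputable def conv {k D : Type*} [Field k] [AddCommGroup D] [Module k D]
    [Coalgebra k D] (f g : Module.Dual k D) : Module.Dual k D :=
  (TensorProduct.lid k k).toLinearMap ∘ₗ TensorProduct.map f g ∘ₗ Coalgebra.comul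

open LinearMap

noncomputable section Aux

variable {k : Type*} [Field k] {D : Type*} [AddCommGroup D] [Module k D]

/-- Apply a functional to the left factor. -/
noncomputable def lSlice (f : Module.Dual k D) (M : Type*) [AddCommGroup M] [Module k M] :
    D ⊗[k] M →ₗ[k] M :=
  (TensorProduct.lid k M).toLinearMap ∘ₗ f.rTensor M

/-- Apply a functional to the right factor. -/
noncomputable def rSlice (g : Module.Dual k D) (M : Type*) [AddCommGroup M] [Module k M] :
    M ⊗[k] D →ₗ[k] M :=
  (TensorProduct.rid k M).toLinearMap ∘ₗ g.lTensor M

variable {M N : Type*} [AddCommGroup M] [Module k M] [AddCommGroup N] [Module k N]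

@[simp] lemma lSlice_tmul (f : Module.Dual k D) (d : D) (m : M) :
    lSlice f M (d ⊗ₜ[k] m) = f d • m := by
  simp [lSlice]

@[simp] lemma rSlice_tmul (g : Module.Dual k D) (m : M) (d : D) :
    rSlice g M (m ⊗ₜ[k] d) = g d • m := by
  simp [rSlice]

lemma lSlice_nat (f : Module.Dual k D) (φ : M →ₗ[k] N) :
    φ ∘ₗ lSlice f M = lSlice f N ∘ₗ φ.lTensor D := by
  ext d m; simp

lemma rSlice_nat (g : Module.Dual k D) (φ : M →ₗ[k] N) :
    φ ∘ₗ rSlice g M = rSlice g N ∘ₗ φ.rTensor D := by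
  ext m d; simp

/-- Detecting zero tensors by a separating family of functionals on the right factor. -/
theorem tensor_eq_zero_of_lTensor {W : Type*} [AddCommGroup W] [Module k W]
    (T : Set (W →ₗ[k] k)) (hsep : ∀ w : W, (∀ φ ∈ T, φ w = 0) → w = 0)
    (u : D ⊗[k] W) (h : ∀ φ ∈ T, φ.lTensor D u = 0) : u = 0 := by
  classical
  set b := Module.Basis.ofVectorSpace k D
  set ι := Module.Basis.ofVectorSpaceIndex k D
  set e1 : D ⊗[k] W ≃ₗ[k] (ι →₀ k) ⊗[k] W :=
    TensorProduct.congr b.repr (LinearEquiv.refl k W)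
  set e2 : (ι →₀ k) ⊗[k] W ≃ₗ[k] (ι →₀ W) := finsuppScalarLeft k W ι
  suffices hz : e2 (e1 u) = 0 by
    apply e1.injective
    apply e2.injective
    simpa using hz
  ext i
  apply hsep
  intro φ hφ
  have key : φ ∘ₗ ((Finsupp.lapply i) ∘ₗ e2.toLinearMap ∘ₗ e1.toLinearMap)
      = ((Finsupp.lapply i) ∘ₗ (finsuppScalarLeft k k ι).toLinearMap ∘ₗ
          (TensorProduct.congr b.repr (LinearEquiv.refl k k)).toLinearMap) ∘ₗ φ.lTensor D := by
    ext d w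
    simp [e1, e2, finsuppScalarLeft_apply_tmul_apply, mul_comm]
  have := LinearMap.congr_fun key u
  simp only [LinearMap.comp_apply, LinearEquiv.coe_coe, Finsupp.lapply_apply] at this
  rw [h φ hφ] at this
  simpa using this

theorem tensor_eq_zero_of_rTensor {W : Type*} [AddCommGroup W] [Module k W]
    (T : Set (W →ₗ[k] k)) (hsep : ∀ w : W, (∀ φ ∈ T, φ w = 0) → w = 0)
    (u : W ⊗[k] D) (h : ∀ φ ∈ T, φ.rTensor D u = 0) : u = 0 := by
  have : (TensorProduct.comm k W D) u = 0 := by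
    apply tensor_eq_zero_of_lTensor T hsep
    intro φ hφ
    have key : φ.lTensor D ∘ₗ (TensorProduct.comm k W D).toLinearMap
        = (TensorProduct.comm k k D).toLinearMap ∘ₗ φ.rTensor D := by
      ext w d; simp
    have := LinearMap.congr_fun key u
    simp only [LinearMap.comp_apply, LinearEquiv.coe_coe] at this
    rw [this, h φ hφ, map_zero]
  exact (_root_.map_eq_zero_iff _ (TensorProduct.comm k W D).injective).mp this

end Aux


section Aux2

variable {k : Type*} [Field k] {D : Type*} [AddCommGroup D] [Module k D]

/-- If all functionals in `J` kill the right components of `t`, then `t ∈ D ⊗ J^⊥`. -/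
theorem mem_range_lTensor_of (J : Submodule k (Module.Dual k D)) (t : D ⊗[k] D)
    (h : ∀ f ∈ J, f.lTensor D t = 0) :
    t ∈ LinearMap.range ((J.dualCoannihilator).subtype.lTensor D) := by
  set E := J.dualCoannihilator
  rw [← lTensor_mkQ]
  rw [LinearMap.mem_ker]
  apply tensor_eq_zero_of_lTensor (T := {φ : (D ⧸ E) →ₗ[k] k | φ ∘ₗ E.mkQ ∈ J})
  · intro w hw
    obtain ⟨x, rfl⟩ := E.mkQ_surjective w
    rw [Submodule.mkQ_apply, Submodule.Quotient.mk_eq_zero]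
    rw [Submodule.mem_dualCoannihilator]
    intro f hf
    have hEf : E ≤ ker f := fun y hy => by
      rw [LinearMap.mem_ker]
      exact (Submodule.mem_dualCoannihilator y).mp hy f hf
    have : (E.liftQ f hEf) ∘ₗ E.mkQ ∈ J := by
      rwa [Submodule.liftQ_mkQ]
    have := hw _ this
    simpa using this
  · intro φ hφ
    rw [← LinearMap.comp_apply, ← lTensor_comp]
    exact h _ hφ

theorem mem_range_rTensor_of (J : Submodule k (Module.Dual k D)) (t : D ⊗[k] D)
    (h : ∀ f ∈ J, f.rTensor D t = 0) :
    t ∈ LinearMap.range ((J.dualCoannihilator).subtype.rTensor D) := by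
  set E := J.dualCoannihilator
  rw [← rTensor_mkQ]
  rw [LinearMap.mem_ker]
  apply tensor_eq_zero_of_rTensor (T := {φ : (D ⧸ E) →ₗ[k] k | φ ∘ₗ E.mkQ ∈ J})
  · intro w hw
    obtain ⟨x, rfl⟩ := E.mkQ_surjective w
    rw [Submodule.mkQ_apply, Submodule.Quotient.mk_eq_zero]
    rw [Submodule.mem_dualCoannihilator]
    intro f hf
    have hEf : E ≤ ker f := fun y hy => by
      rw [LinearMap.mem_ker]
      exact (Submodule.mem_dualCoannihilator y).mp hy f hf
    have : (E.liftQ f hEf) ∘ₗ E.mkQ ∈ J := by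
      rwa [Submodule.liftQ_mkQ]
    have := hw _ this
    simpa using this
  · intro φ hφ
    rw [← LinearMap.comp_apply, ← rTensor_comp]
    exact h _ hφ

/-- If all right slices of `t` lie in `P`, then `t ∈ P ⊗ D`. -/
theorem mem_range_rTensor_of_slices (P : Submodule k D) (t : D ⊗[k] D)
    (h : ∀ g : Module.Dual k D, rSlice g D t ∈ P) :
    t ∈ LinearMap.range (P.subtype.rTensor D) := by
  have key := mem_range_rTensor_of (J := P.dualAnnihilator) t ?_
  · rwa [Subspace.dualAnnihilator_dualCoannihilator_eq] at key
  · intro f hf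
    have hz : (TensorProduct.lid k D) (f.rTensor D t) = 0 := by
      rw [← Module.forall_dual_apply_eq_zero_iff k]
      intro g
      have key2 : g ∘ₗ (TensorProduct.lid k D).toLinearMap ∘ₗ f.rTensor D
          = f ∘ₗ rSlice g D := by
        ext a b; simp [mul_comm]
      have := LinearMap.congr_fun key2 t
      simp only [LinearMap.comp_apply, LinearEquiv.coe_coe] at this
      rw [this]
      exact (Submodule.mem_dualAnnihilator f).mp hf _ (h g)
    exact (_root_.map_eq_zero_iff _ (TensorProduct.lid k D).injective).mp hz

/-- If all left slices of `t` lie in `P`, then `t ∈ D ⊗ P`. -/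
theorem mem_range_lTensor_of_slices (P : Submodule k D) (t : D ⊗[k] D)
    (h : ∀ f : Module.Dual k D, lSlice f D t ∈ P) :
    t ∈ LinearMap.range (P.subtype.lTensor D) := by
  have key := mem_range_lTensor_of (J := P.dualAnnihilator) t ?_
  · rwa [Subspace.dualAnnihilator_dualCoannihilator_eq] at key
  · intro f hf
    have hz : (TensorProduct.rid k D) (f.lTensor D t) = 0 := by
      rw [← Module.forall_dual_apply_eq_zero_iff k]
      intro g
      have key2 : g ∘ₗ (TensorProduct.rid k D).toLinearMap ∘ₗ f.lTensor D
          = f ∘ₗ lSlice g D := by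
        ext a b; simp [mul_comm]
      have := LinearMap.congr_fun key2 t
      simp only [LinearMap.comp_apply, LinearEquiv.coe_coe] at this
      rw [this]
      exact (Submodule.mem_dualAnnihilator f).mp hf _ (h g)
    exact (_root_.map_eq_zero_iff _ (TensorProduct.rid k D).injective).mp hz

/-- `(E ⊗ D) ∩ (D ⊗ F) = E ⊗ F` for subspaces of a vector space. -/
theorem mem_range_map_of (E F : Submodule k D) (t : D ⊗[k] D)
    (h1 : t ∈ LinearMap.range (E.subtype.rTensor D))
    (h2 : t ∈ LinearMap.range (F.subtype.lTensor D)) :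
    t ∈ LinearMap.range (TensorProduct.map E.subtype F.subtype) := by
  obtain ⟨s, hs⟩ := h1
  have ht0 : F.mkQ.lTensor D t = 0 := by
    rw [← LinearMap.mem_ker, lTensor_mkQ]; exact h2
  have hcomm : (E.subtype.rTensor (D ⧸ F)) ∘ₗ (F.mkQ.lTensor E)
      = (F.mkQ.lTensor D) ∘ₗ (E.subtype.rTensor D) := by
    rw [rTensor_comp_lTensor, lTensor_comp_rTensor]
  have hz : (E.subtype.rTensor (D ⧸ F)) (F.mkQ.lTensor E s) = 0 := by
    have := LinearMap.congr_fun hcomm s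
    simp only [LinearMap.comp_apply] at this
    rw [this, hs, ht0]
  have hinj : Function.Injective (E.subtype.rTensor (D ⧸ F)) :=
    Module.Flat.rTensor_preserves_injective_linearMap _ E.injective_subtype
  have hs0 : F.mkQ.lTensor E s = 0 := hinj (by rw [hz, map_zero])
  have : s ∈ LinearMap.range (F.subtype.lTensor E) := by
    rw [← lTensor_mkQ, LinearMap.mem_ker]; exact hs0
  obtain ⟨r, hr⟩ := this
  refine ⟨r, ?_⟩
  have : TensorProduct.map E.subtype F.subtype
      = (E.subtype.rTensor D) ∘ₗ (F.subtype.lTensor E) := by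
    rw [rTensor_comp_lTensor]
  rw [this, LinearMap.comp_apply, hr, hs]

end Aux2


section Coalg

variable {k : Type*} [Field k] {D : Type*} [AddCommGroup D] [Module k D] [Coalgebra k D]

/-- Evaluation of `f ⊗ g` on a tensor. -/
noncomputable def cEval (f g : Module.Dual k D) : D ⊗[k] D →ₗ[k] k :=
  (TensorProduct.lid k k).toLinearMap ∘ₗ TensorProduct.map f g

omit [Coalgebra k D] in
@[simp] lemma cEval_tmul (f g : Module.Dual k D) (a b : D) :
    cEval f g (a ⊗ₜ[k] b) = f a * g b := by simp [cEval, smul_eq_mul]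

lemma conv_eq (f g : Module.Dual k D) : conv f g = cEval f g ∘ₗ Coalgebra.comul := by
  rw [conv, cEval, LinearMap.comp_assoc]

/-- The left action `x ↦ f(x₁) x₂`. -/
noncomputable def Am (f : Module.Dual k D) : D →ₗ[k] D :=
  lSlice f D ∘ₗ Coalgebra.comul

/-- The right action `x ↦ x₁ g(x₂)`. -/
noncomputable def Bm (g : Module.Dual k D) : D →ₗ[k] D :=
  rSlice g D ∘ₗ Coalgebra.comul

lemma comul_Am_apply (f : Module.Dual k D) (x : D) :
    Coalgebra.comul (Am f x) = lSlice f (D ⊗[k] D)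
      ((TensorProduct.assoc k D D D) (Coalgebra.comul.rTensor D (Coalgebra.comul x))) := by
  have h1 := LinearMap.congr_fun
    (lSlice_nat f (Coalgebra.comul : D →ₗ[k] D ⊗[k] D)) (Coalgebra.comul x)
  simp only [LinearMap.comp_apply] at h1
  rw [show Am f x = lSlice f D (Coalgebra.comul x) from rfl, h1, Coalgebra.coassoc_apply]

lemma comul_Bm_apply (g : Module.Dual k D) (x : D) :
    Coalgebra.comul (Bm g x) = rSlice g (D ⊗[k] D)
      (Coalgebra.comul.rTensor D (Coalgebra.comul x)) := by
  have h1 := LinearMap.congr_fun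
    (rSlice_nat g (Coalgebra.comul : D →ₗ[k] D ⊗[k] D)) (Coalgebra.comul x)
  simp only [LinearMap.comp_apply] at h1
  rw [show Bm g x = rSlice g D (Coalgebra.comul x) from rfl, h1]

/- triple slice identities -/
omit [Coalgebra k D] in
lemma T1 (f h : Module.Dual k D) :
    lSlice h D ∘ₗ lSlice f (D ⊗[k] D) ∘ₗ (TensorProduct.assoc k D D D).toLinearMap
      = (TensorProduct.lid k D).toLinearMap ∘ₗ (cEval f h).rTensor D := by
  ext p q r
  simp [smul_smul, mul_comm]

omit [Coalgebra k D] in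
lemma T2 (h g : Module.Dual k D) :
    rSlice h D ∘ₗ rSlice g (D ⊗[k] D)
      = ((TensorProduct.rid k D).toLinearMap ∘ₗ (cEval h g).lTensor D) ∘ₗ
        (TensorProduct.assoc k D D D).toLinearMap := by
  ext p q r
  simp [smul_smul, mul_comm]

omit [Coalgebra k D] in
lemma T3 (f g : Module.Dual k D) :
    rSlice g D ∘ₗ lSlice f (D ⊗[k] D) ∘ₗ (TensorProduct.assoc k D D D).toLinearMap
      = lSlice f D ∘ₗ rSlice g (D ⊗[k] D) := by
  ext p q r
  simp [smul_smul, mul_comm]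

lemma Am_Am_apply (f h : Module.Dual k D) (x : D) :
    Am h (Am f x) = Am (conv f h) x := by
  have e1 : Am h (Am f x) = lSlice h D (Coalgebra.comul (Am f x)) := rfl
  rw [e1, comul_Am_apply]
  have e2 := LinearMap.congr_fun (T1 (D := D) f h)
    (Coalgebra.comul.rTensor D (Coalgebra.comul x))
  simp only [LinearMap.comp_apply, LinearEquiv.coe_coe] at e2
  rw [e2]
  have e3 : ((cEval f h).rTensor D) ((Coalgebra.comul.rTensor D) (Coalgebra.comul x))
      = ((cEval f h ∘ₗ Coalgebra.comul).rTensor D) (Coalgebra.comul x) := by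
    rw [LinearMap.rTensor_comp]; rfl
  rw [e3, ← conv_eq]
  rfl

lemma Bm_Bm_apply (h g : Module.Dual k D) (x : D) :
    Bm h (Bm g x) = Bm (conv h g) x := by
  have e1 : Bm h (Bm g x) = rSlice h D (Coalgebra.comul (Bm g x)) := rfl
  rw [e1, comul_Bm_apply]
  have e2 := LinearMap.congr_fun (T2 (D := D) h g)
    (Coalgebra.comul.rTensor D (Coalgebra.comul x))
  simp only [LinearMap.comp_apply, LinearEquiv.coe_coe] at e2
  rw [e2, Coalgebra.coassoc_apply]
  have e3 : ((cEval h g).lTensor D) ((Coalgebra.comul.lTensor D) (Coalgebra.comul x))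
      = ((cEval h g ∘ₗ Coalgebra.comul).lTensor D) (Coalgebra.comul x) := by
    rw [LinearMap.lTensor_comp]; rfl
  rw [e3, ← conv_eq]
  rfl

lemma Am_Bm_eq (f g : Module.Dual k D) (x : D) :
    Am f (Bm g x) = lSlice f D (rSlice g (D ⊗[k] D)
      (Coalgebra.comul.rTensor D (Coalgebra.comul x))) := by
  have e1 : Am f (Bm g x) = lSlice f D (Coalgebra.comul (Bm g x)) := rfl
  rw [e1, comul_Bm_apply]

lemma Am_Bm_comm_apply (f g : Module.Dual k D) (x : D) :
    Am f (Bm g x) = Bm g (Am f x) := by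
  rw [Am_Bm_eq]
  have e1 : Bm g (Am f x) = rSlice g D (Coalgebra.comul (Am f x)) := rfl
  rw [e1, comul_Am_apply]
  have e2 := LinearMap.congr_fun (T3 (D := D) f g)
    (Coalgebra.comul.rTensor D (Coalgebra.comul x))
  simp only [LinearMap.comp_apply, LinearEquiv.coe_coe] at e2
  rw [e2]

lemma Am_counit_apply (x : D) : Am (Coalgebra.counit : D →ₗ[k] k) x = x := by
  simp only [Am, lSlice, LinearMap.comp_apply, LinearEquiv.coe_coe]
  rw [show (Coalgebra.counit.rTensor D) (Coalgebra.comul x)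
    = (Coalgebra.counit.rTensor D ∘ₗ Coalgebra.comul) x from rfl,
    Coalgebra.rTensor_counit_comp_comul]
  simp

lemma Bm_counit_apply (x : D) : Bm (Coalgebra.counit : D →ₗ[k] k) x = x := by
  simp only [Bm, rSlice, LinearMap.comp_apply, LinearEquiv.coe_coe]
  rw [show (Coalgebra.counit.lTensor D) (Coalgebra.comul x)
    = (Coalgebra.counit.lTensor D ∘ₗ Coalgebra.comul) x from rfl,
    Coalgebra.lTensor_counit_comp_comul]
  simp

end Coalg

section FinDim

variable {k : Type*} [Field k] {D : Type*} [AddCommGroup D] [Module k D]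

theorem exists_findim_lSlice (s : D ⊗[k] D) :
    ∃ V : Submodule k D, FiniteDimensional k V ∧ ∀ f : Module.Dual k D, lSlice f D s ∈ V := by
  induction s using TensorProduct.induction_on with
  | zero => exact ⟨⊥, inferInstance, fun f => by simp⟩
  | tmul p q =>
    refine ⟨Submodule.span k {q}, FiniteDimensional.span_of_finite _ (Set.finite_singleton q),
      fun f => ?_⟩
    rw [lSlice_tmul]
    exact Submodule.smul_mem _ _ (Submodule.subset_span rfl)
  | add s1 s2 ih1 ih2 =>
    obtain ⟨V1, hV1, h1⟩ := ih1
    obtain ⟨V2, hV2, h2⟩ := ih2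
    refine ⟨V1 ⊔ V2, inferInstance, fun f => ?_⟩
    rw [map_add]
    exact Submodule.add_mem _ (Submodule.mem_sup_left (h1 f)) (Submodule.mem_sup_right (h2 f))

theorem exists_findim_double (w : (D ⊗[k] D) ⊗[k] D) :
    ∃ V : Submodule k D, FiniteDimensional k V ∧
      ∀ f g : Module.Dual k D, lSlice f D (rSlice g (D ⊗[k] D) w) ∈ V := by
  induction w using TensorProduct.induction_on with
  | zero => exact ⟨⊥, inferInstance, fun f g => by simp⟩
  | tmul s r =>
    obtain ⟨V, hV, hmem⟩ := exists_findim_lSlice s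
    refine ⟨V, hV, fun f g => ?_⟩
    rw [rSlice_tmul, map_smul]
    exact Submodule.smul_mem _ _ (hmem f)
  | add w1 w2 ih1 ih2 =>
    obtain ⟨V1, hV1, h1⟩ := ih1
    obtain ⟨V2, hV2, h2⟩ := ih2
    refine ⟨V1 ⊔ V2, inferInstance, fun f g => ?_⟩
    rw [map_add, map_add]
    exact Submodule.add_mem _ (Submodule.mem_sup_left (h1 f g))
      (Submodule.mem_sup_right (h2 f g))

variable [Coalgebra k D]

variable (k) in
/-- The key span: the smallest subcoalgebra-like span attached to `x`. -/
noncomputable def genSpan (x : D) : Submodule k D :=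
  Submodule.span k (Set.range fun p : Module.Dual k D × Module.Dual k D => Am p.1 (Bm p.2 x))

theorem genSpan_isSubcoalgebra (x : D) : IsSubcoalgebra (genSpan k x) := by
  intro y hy
  set E := genSpan k x with hE
  induction hy using Submodule.span_induction with
  | mem y hmem =>
    obtain ⟨⟨f, g⟩, rfl⟩ := hmem
    apply mem_range_map_of
    · apply mem_range_rTensor_of_slices
      intro g'
      have : rSlice g' D (Coalgebra.comul (Am f (Bm g x))) = Bm g' (Am f (Bm g x)) := rfl
      rw [this, ← Am_Bm_comm_apply, Bm_Bm_apply]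
      exact Submodule.subset_span ⟨(f, conv g' g), rfl⟩
    · apply mem_range_lTensor_of_slices
      intro f'
      have : lSlice f' D (Coalgebra.comul (Am f (Bm g x))) = Am f' (Am f (Bm g x)) := rfl
      rw [this, Am_Am_apply]
      exact Submodule.subset_span ⟨(conv f f', g), rfl⟩
  | zero => simp
  | add a b _ _ iha ihb =>
    rw [map_add]; exact Submodule.add_mem _ iha ihb
  | smul c a _ iha =>
    rw [map_smul]; exact Submodule.smul_mem _ _ iha

theorem mem_genSpan_self (x : D) : x ∈ genSpan k x := by
  have h0 : Am (Coalgebra.counit : D →ₗ[k] k) (Bm (Coalgebra.counit : D →ₗ[k] k) x)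
      ∈ genSpan k x :=
    Submodule.subset_span ⟨((Coalgebra.counit : D →ₗ[k] k),
      (Coalgebra.counit : D →ₗ[k] k)), rfl⟩
  rwa [Bm_counit_apply, Am_counit_apply] at h0

theorem genSpan_finiteDimensional (x : D) : FiniteDimensional k (genSpan k x) := by
  obtain ⟨V, hV, hmem⟩ := exists_findim_double ((Coalgebra.comul (R := k)).rTensor D (Coalgebra.comul x))
  have hle : genSpan k x ≤ V := by
    rw [genSpan, Submodule.span_le]
    rintro y ⟨⟨f, g⟩, rfl⟩
    simp only
    rw [Am_Bm_eq]
    exact hmem f g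
  exact Submodule.finiteDimensional_of_le hle

theorem findim_of_simple [Nontrivial D]
    (hsimple : ∀ E : Submodule k D, IsSubcoalgebra E → E = ⊥ ∨ E = ⊤) :
    FiniteDimensional k D := by
  obtain ⟨x, hx⟩ := exists_ne (0 : D)
  rcases hsimple (genSpan k x) (genSpan_isSubcoalgebra x) with h | h
  · exact absurd (h ▸ mem_genSpan_self x) (by simpa using hx)
  · have := genSpan_finiteDimensional (k := k) x
    rw [h] at this
    exact (Submodule.topEquiv (R := k) (M := D)).finiteDimensional

end FinDim
/-- If `D` is a simple `k`-coalgebra, then the dual convolution algebra `D*` is a simple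
`k`-algebra: it is nonzero and every two-sided ideal (a subspace closed under left and
right convolution by arbitrary functionals) is `0` or all of `D*`. -/
theorem dual_of_simple_coalgebra_is_simple (k D : Type*) [Field k] [AddCommGroup D]
    [Module k D] [Coalgebra k D] [Nontrivial D]
    (hsimple : ∀ E : Submodule k D, IsSubcoalgebra E → E = ⊥ ∨ E = ⊤) :
    Nontrivial (Module.Dual k D) ∧
    ∀ J : Submodule k (Module.Dual k D),
      (∀ f ∈ J, ∀ g : Module.Dual k D, conv g f ∈ J ∧ conv f g ∈ J) →
      J = ⊥ ∨ J = ⊤ := by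
  constructor
  · obtain ⟨x, hx⟩ := exists_ne (0 : D)
    have hne : ¬∀ φ : Module.Dual k D, φ x = 0 := fun h =>
      hx ((Module.forall_dual_apply_eq_zero_iff k x).mp h)
    push_neg at hne
    obtain ⟨f, hf⟩ := hne
    exact nontrivial_of_ne f 0 fun h => hf (by rw [h]; rfl)
  · intro J hJ
    have fd : FiniteDimensional k D := findim_of_simple hsimple
    by_cases hbot : J = ⊥
    · exact Or.inl hbot
    right
    set E := J.dualCoannihilator with hE
    have hsub : IsSubcoalgebra E := by
      intro x hx
      set t := Coalgebra.comul (R := k) x with ht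
      have hr : ∀ f ∈ J, f.lTensor D t = 0 := by
        intro f hf
        have hz : (TensorProduct.rid k D) (f.lTensor D t) = 0 := by
          rw [← Module.forall_dual_apply_eq_zero_iff k]
          intro g
          have key2 : g ∘ₗ (TensorProduct.rid k D).toLinearMap ∘ₗ f.lTensor D
              = cEval g f := by
            ext a b; simp [mul_comm]
          have e := LinearMap.congr_fun key2 t
          simp only [LinearMap.comp_apply, LinearEquiv.coe_coe] at e
          rw [e, show cEval g f t = conv g f x from by rw [conv_eq]; rfl]
          exact (Submodule.mem_dualCoannihilator x).mp hx _ ((hJ f hf g).1)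
        exact (_root_.map_eq_zero_iff _ (TensorProduct.rid k D).injective).mp hz
      have hl : ∀ f ∈ J, f.rTensor D t = 0 := by
        intro f hf
        have hz : (TensorProduct.lid k D) (f.rTensor D t) = 0 := by
          rw [← Module.forall_dual_apply_eq_zero_iff k]
          intro g
          have key2 : g ∘ₗ (TensorProduct.lid k D).toLinearMap ∘ₗ f.rTensor D
              = cEval f g := by
            ext a b; simp [mul_comm]
          have e := LinearMap.congr_fun key2 t
          simp only [LinearMap.comp_apply, LinearEquiv.coe_coe] at e
          rw [e, show cEval f g t = conv f g x from by rw [conv_eq]; rfl]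
          exact (Submodule.mem_dualCoannihilator x).mp hx _ ((hJ f hf g).2)
        exact (_root_.map_eq_zero_iff _ (TensorProduct.lid k D).injective).mp hz
      exact mem_range_map_of _ _ t (mem_range_rTensor_of J t hl) (mem_range_lTensor_of J t hr)
    rcases hsimple E hsub with hEbot | hEtop
    · have h1 := Subspace.finrank_add_finrank_dualCoannihilator_eq J
      rw [← hE, hEbot, finrank_bot, add_zero] at h1
      have h2 : Module.finrank k (Module.Dual k D) = Module.finrank k D :=
        Subspace.dual_finrank_eq
      exact Submodule.eq_top_of_finrank_eq (by rw [h1, h2])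
    · exfalso
      apply hbot
      rw [eq_bot_iff]
      intro f hf
      rw [Submodule.mem_bot]
      ext x
      have hxE : x ∈ E := hEtop ▸ Submodule.mem_top
      simpa using (Submodule.mem_dualCoannihilator x).mp hxE f hf
end
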